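/- Let m, n ≥ 1 and let B¹,…,Bⁿ be m×m real matrices, each skew-symmetric and orthogonal, with BⁱBʲ = −BʲBⁱ for i ≠ j. Define d(x,t) = (‖x‖⁴ + 16‖t‖²)^{1/4} on ℝᵐ × ℝⁿ. Then for every (x,t) ≠ (0,0), the horizontal gradient ∇_H d = (X₁d,…,X_m d) satisfies ‖∇_H d(x,t)‖² = ‖x‖² / d(x,t)², where X_j u(x,t) = ∂_{x_j}u(x,t) + ½Σ_{k=1}^n (Bᵏx)_j ∂_{t_k}u(x,t). Equivalently, φ = d⁴ satisfies ‖∇_H φ(x,t)‖² = 16‖x‖² φ(x,t) for all (x,t). -/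

import Mathlib

open Matrix MeasureTheory
open scoped BigOperators

noncomputable section

/-- The underlying space of the prototype H-type group: `ℝᵐ × ℝⁿ`. -/
abbrev G (m n : ℕ) : Type := (Fin m → ℝ) × (Fin n → ℝ)

/-- Squared Euclidean norm on `ℝᵏ`. -/
def sqnorm {k : ℕ} (x : Fin k → ℝ) : ℝ := ∑ i, x i ^ 2

/-- The homogeneous norm `d(x,t) = (‖x‖⁴ + 16‖t‖²)^(1/4)`. -/
def hnorm {m n : ℕ} (p : G m n) : ℝ := (sqnorm p.1 ^ 2 + 16 * sqnorm p.2) ^ (4⁻¹ : ℝ)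

/-- The group law `(x,t)∘(y,s) = (x+y, t+s+½⟨Bᵏx,y⟩)`. -/
def gmul {m n : ℕ} (B : Fin n → Matrix (Fin m) (Fin m) ℝ) (p q : G m n) : G m n :=
  (p.1 + q.1, fun k => p.2 k + q.2 k + (1 / 2) * ((B k).mulVec p.1 ⬝ᵥ q.1))

/-- The group inverse `p⁻¹ = -p`. -/
def ginv {m n : ℕ} (p : G m n) : G m n := (-p.1, -p.2)

/-- The `d`-ball `B_R(p) = {q : d(p⁻¹∘q) < R}`. -/
def dball {m n : ℕ} (B : Fin n → Matrix (Fin m) (Fin m) ℝ) (p : G m n) (R : ℝ) :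
    Set (G m n) := {q | hnorm (gmul B (ginv p) q) < R}

/-- The vector of the horizontal field `X_j` at `p`:
`X_j = ∂_{x_j} + ½ Σ_k (Bᵏx)_j ∂_{t_k}`. -/
def Xvec {m n : ℕ} (B : Fin n → Matrix (Fin m) (Fin m) ℝ) (j : Fin m) (p : G m n) : G m n :=
  (fun i => if i = j then 1 else 0, fun k => (1 / 2) * (B k).mulVec p.1 j)

/-- The horizontal derivative `X_j u (p)`. -/
def Xop {m n : ℕ} (B : Fin n → Matrix (Fin m) (Fin m) ℝ) (j : Fin m) (u : G m n → ℝ)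
    (p : G m n) : ℝ := fderiv ℝ u p (Xvec B j p)

/-- The horizontally elliptic operator `L_A u = Σ_{i,j} a_{ij} X_i X_j u`. -/
def Lop {m n : ℕ} (B : Fin n → Matrix (Fin m) (Fin m) ℝ)
    (A : G m n → Matrix (Fin m) (Fin m) ℝ) (u : G m n → ℝ) (p : G m n) : ℝ :=
  ∑ i, ∑ j, A p i j * Xop B i (Xop B j u) p

/-- The defining conditions on the matrices `B¹,…,Bⁿ` of a prototype H-type group:
skew-symmetric, orthogonal, pairwise anticommuting. -/
def HTypeData {m n : ℕ} (B : Fin n → Matrix (Fin m) (Fin m) ℝ) : Prop :=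
  (∀ k, (B k)ᵀ = -(B k)) ∧ (∀ k, (B k)ᵀ * B k = 1) ∧
    (∀ i j, i ≠ j → B i * B j = -(B j * B i))

/-- The quadratic form `⟨Aξ, ξ⟩`. -/
def quadForm {m : ℕ} (A : Matrix (Fin m) (Fin m) ℝ) (ξ : Fin m → ℝ) : ℝ :=
  A.mulVec ξ ⬝ᵥ ξ

/-- Uniform ellipticity: `λ‖ξ‖² ≤ ⟨Aξ,ξ⟩ ≤ Λ‖ξ‖²`. -/
def UnifElliptic {m : ℕ} (lam Lam : ℝ) (A : Matrix (Fin m) (Fin m) ℝ) : Prop :=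
  ∀ ξ : Fin m → ℝ, lam * sqnorm ξ ≤ quadForm A ξ ∧ quadForm A ξ ≤ Lam * sqnorm ξ

/-- The δ-Landis condition
`Tr(A) + (Q+2−m)·max_{‖ξ‖=1}⟨Aξ,ξ⟩ ≤ (Q+4−δ)·min_{‖ξ‖=1}⟨Aξ,ξ⟩`,
stated equivalently via universal quantification over unit vectors. -/
def Landis {m : ℕ} (Q δ : ℝ) (A : Matrix (Fin m) (Fin m) ℝ) : Prop :=
  ∀ ξ ζ : Fin m → ℝ, sqnorm ξ = 1 → sqnorm ζ = 1 →
    A.trace + (Q + 2 - m) * quadForm A ξ ≤ (Q + 4 - δ) * quadForm A ζ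

/-- `φ = d⁴`. -/
def phi {m n : ℕ} (p : G m n) : ℝ := sqnorm p.1 ^ 2 + 16 * sqnorm p.2


lemma skew_self_dot {m : ℕ} {M : Matrix (Fin m) (Fin m) ℝ} (h : Mᵀ = -M)
    (x : Fin m → ℝ) : M.mulVec x ⬝ᵥ x = 0 := by
  have h1 : M.mulVec x ⬝ᵥ x = x ⬝ᵥ M.mulVec x := dotProduct_comm _ _
  rw [Matrix.dotProduct_mulVec, ← Matrix.mulVec_transpose, h, Matrix.neg_mulVec,
    neg_dotProduct] at h1
  linarith

lemma hasFDerivAt_sqnorm {k : ℕ} (x : Fin k → ℝ) :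
    HasFDerivAt sqnorm (∑ i, (2 * x i) • (ContinuousLinearMap.proj i : (Fin k → ℝ) →L[ℝ] ℝ)) x := by
  have : HasFDerivAt (fun y : Fin k → ℝ => ∑ i, y i ^ 2)
      (∑ i, (2 * x i) • (ContinuousLinearMap.proj i : (Fin k → ℝ) →L[ℝ] ℝ)) x := by
    apply HasFDerivAt.fun_sum
    intro i _
    have h0 : HasFDerivAt (fun y : Fin k → ℝ => y i)
        (ContinuousLinearMap.proj i : (Fin k → ℝ) →L[ℝ] ℝ) x :=
      (ContinuousLinearMap.proj i : (Fin k → ℝ) →L[ℝ] ℝ).hasFDerivAt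
    have h2 := h0.mul h0
    have heq : (2 * x i) • (ContinuousLinearMap.proj i : (Fin k → ℝ) →L[ℝ] ℝ)
        = x i • (ContinuousLinearMap.proj i : (Fin k → ℝ) →L[ℝ] ℝ)
          + x i • (ContinuousLinearMap.proj i : (Fin k → ℝ) →L[ℝ] ℝ) := by
      rw [two_mul, add_smul]
    rw [heq]
    simpa [sq, Pi.mul_def] using h2
  exact this

lemma sqnorm_dot {k : ℕ} (x : Fin k → ℝ) : ∑ i, x i * x i = sqnorm x := by
  simp [sqnorm, sq]

lemma sum_sq_key {m n : ℕ} (B : Fin n → Matrix (Fin m) (Fin m) ℝ)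
    (hskew : ∀ k, (B k)ᵀ = -(B k)) (horth : ∀ k, (B k)ᵀ * B k = 1)
    (hanti : ∀ i j, i ≠ j → B i * B j = -(B j * B i))
    (x : Fin m → ℝ) (t : Fin n → ℝ) :
    ∑ j, (4 * sqnorm x * x j + 16 * ∑ k, t k * (B k).mulVec x j) ^ 2
      = 16 * sqnorm x * (sqnorm x ^ 2 + 16 * sqnorm t) := by
  set s := sqnorm x with hs
  have hcross : ∀ k, ∑ j, x j * (B k).mulVec x j = 0 := by
    intro k
    have := skew_self_dot (hskew k) x
    rw [dotProduct_comm] at this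
    simpa [dotProduct] using this
  have hBB : ∀ k l, ∑ j, (B k).mulVec x j * (B l).mulVec x j
      = if k = l then s else 0 := by
    intro k l
    have h1 : (B k).mulVec x ⬝ᵥ (B l).mulVec x = (((B k)ᵀ * B l).mulVec x) ⬝ᵥ x := by
      rw [dotProduct_comm, Matrix.dotProduct_mulVec, ← Matrix.mulVec_transpose,
        Matrix.mulVec_mulVec]
    by_cases hkl : k = l
    · subst hkl
      rw [horth k, Matrix.one_mulVec] at h1
      simp only [if_pos rfl]
      simpa [dotProduct, sqnorm_dot] using h1
    · have hM : ((B k)ᵀ * B l)ᵀ = -((B k)ᵀ * B l) := by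
        rw [Matrix.transpose_mul, Matrix.transpose_transpose, hskew k, hskew l]
        rw [Matrix.neg_mul, Matrix.neg_mul, neg_neg, hanti k l hkl]
      have := skew_self_dot hM x
      rw [this] at h1
      simp only [if_neg hkl]
      simpa [dotProduct] using h1
  have expand : ∀ j : Fin m,
      (4 * s * x j + 16 * ∑ k, t k * (B k).mulVec x j) ^ 2
      = 16 * s^2 * (x j * x j)
        + 128 * s * (x j * ∑ k, t k * (B k).mulVec x j)
        + 256 * ((∑ k, t k * (B k).mulVec x j) * (∑ k, t k * (B k).mulVec x j)) := by
    intro j; ring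
  rw [Finset.sum_congr rfl fun j _ => expand j]
  rw [Finset.sum_add_distrib, Finset.sum_add_distrib, ← Finset.mul_sum, ← Finset.mul_sum,
    ← Finset.mul_sum]
  have h2 : ∑ j, x j * ∑ k, t k * (B k).mulVec x j = 0 := by
    have : ∀ j, x j * ∑ k, t k * (B k).mulVec x j
        = ∑ k, t k * (x j * (B k).mulVec x j) := by
      intro j; rw [Finset.mul_sum]; apply Finset.sum_congr rfl; intro k _; ring
    rw [Finset.sum_congr rfl fun j _ => this j, Finset.sum_comm]
    simp [← Finset.mul_sum, hcross]
  have h3 : ∑ j, (∑ k, t k * (B k).mulVec x j) * (∑ k, t k * (B k).mulVec x j)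
      = s * sqnorm t := by
    have : ∀ j, (∑ k, t k * (B k).mulVec x j) * (∑ l, t l * (B l).mulVec x j)
        = ∑ k, ∑ l, t k * t l * ((B k).mulVec x j * (B l).mulVec x j) := by
      intro j
      rw [Finset.sum_mul_sum]
      apply Finset.sum_congr rfl; intro k _; apply Finset.sum_congr rfl; intro l _; ring
    rw [Finset.sum_congr rfl fun j _ => this j, Finset.sum_comm]
    have : ∀ k, ∑ j, ∑ l, t k * t l * ((B k).mulVec x j * (B l).mulVec x j)
        = t k ^ 2 * s := by
      intro k
      rw [Finset.sum_comm]
      have : ∀ l, ∑ j, t k * t l * ((B k).mulVec x j * (B l).mulVec x j)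
          = t k * t l * (if k = l then s else 0) := by
        intro l
        rw [← Finset.mul_sum, hBB k l]
      rw [Finset.sum_congr rfl fun l _ => this l]
      simp only [mul_ite, mul_zero, Finset.sum_ite_eq, Finset.mem_univ, if_true]
      ring
    rw [Finset.sum_congr rfl fun k _ => this k, ← Finset.sum_mul]
    rw [hs]
    simp only [sqnorm]
    ring
  rw [h2, h3, sqnorm_dot]
  ring

def Dsq {k : ℕ} (x : Fin k → ℝ) : (Fin k → ℝ) →L[ℝ] ℝ :=
  ∑ i, (2 * x i) • (ContinuousLinearMap.proj i : (Fin k → ℝ) →L[ℝ] ℝ)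

def Dphi {m n : ℕ} (p : G m n) : G m n →L[ℝ] ℝ :=
  ((2 * sqnorm p.1) • Dsq p.1).comp (ContinuousLinearMap.fst ℝ (Fin m → ℝ) (Fin n → ℝ))
  + ((16 : ℝ) • Dsq p.2).comp (ContinuousLinearMap.snd ℝ (Fin m → ℝ) (Fin n → ℝ))

lemma hasFDerivAt_phi {m n : ℕ} (p : G m n) : HasFDerivAt phi (Dphi p) p := by
  have h1 : HasFDerivAt (fun q : G m n => sqnorm q.1)
      ((Dsq p.1).comp (ContinuousLinearMap.fst ℝ (Fin m → ℝ) (Fin n → ℝ))) p :=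
    (hasFDerivAt_sqnorm p.1).comp p (hasFDerivAt_fst)
  have h2 : HasFDerivAt (fun q : G m n => sqnorm q.2)
      ((Dsq p.2).comp (ContinuousLinearMap.snd ℝ (Fin m → ℝ) (Fin n → ℝ))) p :=
    (hasFDerivAt_sqnorm p.2).comp p (hasFDerivAt_snd)
  have h1' : HasFDerivAt (fun q : G m n => sqnorm q.1 ^ 2)
      (((2 * sqnorm p.1) • Dsq p.1).comp
        (ContinuousLinearMap.fst ℝ (Fin m → ℝ) (Fin n → ℝ))) p := by
    have := h1.mul h1
    have heq : ((2 * sqnorm p.1) • Dsq p.1).comp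
        (ContinuousLinearMap.fst ℝ (Fin m → ℝ) (Fin n → ℝ))
        = sqnorm p.1 • (Dsq p.1).comp (ContinuousLinearMap.fst ℝ (Fin m → ℝ) (Fin n → ℝ))
          + sqnorm p.1 • (Dsq p.1).comp (ContinuousLinearMap.fst ℝ (Fin m → ℝ) (Fin n → ℝ)) := by
      rw [two_mul, add_smul, ContinuousLinearMap.add_comp]
      congr 1 <;> rw [ContinuousLinearMap.smul_comp]
    rw [heq]
    simpa [sq, Pi.mul_def] using this
  have h2' := h2.const_mul (16 : ℝ)
  have := h1'.add h2'
  have heq2 : Dphi p = ((2 * sqnorm p.1) • Dsq p.1).comp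
        (ContinuousLinearMap.fst ℝ (Fin m → ℝ) (Fin n → ℝ))
      + (16 : ℝ) • (Dsq p.2).comp (ContinuousLinearMap.snd ℝ (Fin m → ℝ) (Fin n → ℝ)) := by
    rw [Dphi, ContinuousLinearMap.smul_comp, ContinuousLinearMap.smul_comp]
  rw [heq2]
  exact this.congr_fderiv rfl

lemma Xop_phi {m n : ℕ} (B : Fin n → Matrix (Fin m) (Fin m) ℝ) (j : Fin m) (p : G m n) :
    Xop B j phi p = 4 * sqnorm p.1 * p.1 j + 16 * ∑ k, p.2 k * (B k).mulVec p.1 j := by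
  rw [Xop, (hasFDerivAt_phi p).fderiv]
  simp only [Dphi, Dsq, Xvec, ContinuousLinearMap.add_apply, ContinuousLinearMap.comp_apply,
    ContinuousLinearMap.coe_fst', ContinuousLinearMap.coe_snd',
    ContinuousLinearMap.smul_apply, ContinuousLinearMap.coe_sum', Finset.sum_apply,
    ContinuousLinearMap.proj_apply, smul_eq_mul, mul_ite, mul_one, mul_zero,
    Finset.sum_ite_eq', Finset.mem_univ, if_true]
  rw [Finset.mul_sum, Finset.mul_sum]
  ring_nf

lemma sqnorm_nonneg {k : ℕ} (x : Fin k → ℝ) : 0 ≤ sqnorm x :=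
  Finset.sum_nonneg fun i _ => sq_nonneg _

lemma sqnorm_eq_zero {k : ℕ} {x : Fin k → ℝ} (h : sqnorm x = 0) : x = 0 := by
  funext i
  have := (Finset.sum_eq_zero_iff_of_nonneg (fun i _ => sq_nonneg (x i))).1 h i (Finset.mem_univ i)
  exact pow_eq_zero_iff (two_ne_zero) |>.1 this

lemma phi_pos {m n : ℕ} {p : G m n} (hp : p ≠ 0) : 0 < phi p := by
  have h0 : (0:ℝ) ≤ phi p := by
    have := sqnorm_nonneg p.1; have := sqnorm_nonneg p.2
    unfold phi; nlinarith [sq_nonneg (sqnorm p.1)]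
  rcases lt_or_eq_of_le h0 with h | h
  · exact h
  · exfalso
    rw [phi] at h
    have h1 : sqnorm p.1 ^ 2 = 0 ∧ sqnorm p.2 = 0 := by
      constructor <;> nlinarith [sqnorm_nonneg p.1, sqnorm_nonneg p.2, sq_nonneg (sqnorm p.1), h.symm]
    have hx : p.1 = 0 := sqnorm_eq_zero (pow_eq_zero_iff two_ne_zero |>.1 h1.1)
    have ht : p.2 = 0 := sqnorm_eq_zero h1.2
    exact hp (Prod.ext hx ht)

lemma hnorm_eq {m n : ℕ} (p : G m n) : hnorm p = phi p ^ (4⁻¹ : ℝ) := rfl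

lemma Xop_hnorm {m n : ℕ} (B : Fin n → Matrix (Fin m) (Fin m) ℝ) (j : Fin m)
    {p : G m n} (hp : phi p ≠ 0) :
    Xop B j hnorm p = (4⁻¹ * phi p ^ ((4⁻¹ : ℝ) - 1)) * Xop B j phi p := by
  have h : HasFDerivAt hnorm (((4⁻¹ : ℝ) * phi p ^ ((4⁻¹ : ℝ) - 1)) • Dphi p) p := by
    have := (hasFDerivAt_phi p).rpow_const (p := (4⁻¹ : ℝ)) (Or.inl hp)
    exact this
  rw [Xop, h.fderiv, ContinuousLinearMap.smul_apply, smul_eq_mul, Xop,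
    (hasFDerivAt_phi p).fderiv]


/-- The horizontal gradient of the homogeneous norm satisfies
`‖∇_H d(x,t)‖² = ‖x‖²/d(x,t)²` away from the origin; equivalently, `φ = d⁴` satisfies
`‖∇_H φ(x,t)‖² = 16‖x‖²φ(x,t)` everywhere. -/
theorem horizontal_gradient_norm_identity
    (m n : ℕ) (hm : 1 ≤ m) (hn : 1 ≤ n)
    (B : Fin n → Matrix (Fin m) (Fin m) ℝ) (hB : HTypeData B) :
    (∀ p : G m n, p ≠ 0 →
      ∑ j, (Xop B j hnorm p) ^ 2 = sqnorm p.1 / hnorm p ^ 2) ∧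
    (∀ p : G m n,
      ∑ j, (Xop B j phi p) ^ 2 = 16 * sqnorm p.1 * phi p) := by
  obtain ⟨hskew, horth, hanti⟩ := hB
  have phiPart : ∀ p : G m n, ∑ j, (Xop B j phi p) ^ 2 = 16 * sqnorm p.1 * phi p := by
    intro p
    rw [Finset.sum_congr rfl fun j _ => by rw [Xop_phi]]
    exact sum_sq_key B hskew horth hanti p.1 p.2
  refine ⟨?_, phiPart⟩
  intro p hp
  have hpos : 0 < phi p := phi_pos hp
  have hne : phi p ≠ 0 := ne_of_gt hpos
  rw [Finset.sum_congr rfl fun j _ => by rw [Xop_hnorm B j hne]]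
  have expand : ∀ j : Fin m, ((4⁻¹ * phi p ^ ((4⁻¹ : ℝ) - 1)) * Xop B j phi p) ^ 2
      = (4⁻¹ * phi p ^ ((4⁻¹ : ℝ) - 1)) ^ 2 * (Xop B j phi p) ^ 2 := fun j => by ring
  rw [Finset.sum_congr rfl fun j _ => expand j, ← Finset.mul_sum, phiPart p]
  have e1 : (phi p ^ ((4⁻¹ : ℝ) - 1)) ^ 2 = phi p ^ (-(3/2) : ℝ) := by
    rw [← Real.rpow_natCast (phi p ^ ((4⁻¹ : ℝ) - 1)) 2, ← Real.rpow_mul hpos.le]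
    norm_num
  have e2 : hnorm p ^ 2 = phi p ^ ((1/2) : ℝ) := by
    rw [hnorm_eq, ← Real.rpow_natCast (phi p ^ ((4⁻¹ : ℝ))) 2, ← Real.rpow_mul hpos.le]
    norm_num
  have e3 : phi p ^ (-(3/2) : ℝ) * phi p = phi p ^ (-(1/2) : ℝ) := by
    nth_rewrite 2 [← Real.rpow_one (phi p)]
    rw [← Real.rpow_add hpos]
    norm_num
  have e5 : phi p ^ (-(3/2) : ℝ) * phi p * phi p ^ ((1/2) : ℝ) = 1 := by
    nth_rewrite 2 [← Real.rpow_one (phi p)]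
    rw [← Real.rpow_add hpos, ← Real.rpow_add hpos]
    norm_num
  rw [mul_pow, e1, e2, eq_div_iff (ne_of_gt (Real.rpow_pos_of_pos hpos _))]
  linear_combination sqnorm p.1 * e5

end
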